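/- (Determinant formula for the second weighted zeta function.) Let G be a finite connected simple graph with n vertices and m edges, and let w assign to each dart e of G a nonzero complex number w(e). Then for every complex number t, (1 − t²)^n · det(I_{2m} − t·(B_w − J₀)) = (1 − t²)^m · det(I_n − t·W(G) + t²·(D_w − I_n)). (Theorem 3.2, with the factor (1−t²)^{m−n} cleared of negative exponents.) -/

import Mathlib

open Matrix SimpleGraph Polynomial

/-- The matrix `B`: `B e f = 1` if `t e = o f`, else `0`. -/
def edgeB {V : Type*} (R : Type*) [Zero R] [One R] [DecidableEq V] (G : SimpleGraph V) :
    Matrix G.Dart G.Dart R :=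
  fun e f => if e.toProd.2 = f.toProd.1 then 1 else 0

/-- The matrix `J₀`: `(J₀) e f = 1` if `f = e⁻¹`, else `0`. -/
def edgeJ {V : Type*} (R : Type*) [Zero R] [One R] [DecidableEq V] (G : SimpleGraph V) :
    Matrix G.Dart G.Dart R :=
  fun e f => if f = e.symm then 1 else 0

/-- The weighted matrix `B_w`: `(B_w) e f = w f` if `t e = o f`, else `0`. -/
def edgeBw {V : Type*} [DecidableEq V] (G : SimpleGraph V) (w : G.Dart → ℂ) :
    Matrix G.Dart G.Dart ℂ :=
  Matrix.of fun e f => if e.toProd.2 = f.toProd.1 then w f else 0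

/-- The weighted matrix `W(G)`: `W u v = w (u,v)` if `(u,v)` is a dart, else `0`. -/
def weightedW {V : Type*} (G : SimpleGraph V) [DecidableRel G.Adj] (w : G.Dart → ℂ) :
    Matrix V V ℂ :=
  Matrix.of fun u v => if h : G.Adj u v then w (SimpleGraph.Dart.mk (u, v) h) else 0

section Aux

set_option linter.unusedSectionVars false

variable {V : Type*} [Fintype V] [DecidableEq V] (G : SimpleGraph V) [DecidableRel G.Adj]
  (w : G.Dart → ℂ)

/-- Terminal incidence matrix. -/
def dartL : Matrix G.Dart V ℂ := Matrix.of fun e v => if e.toProd.2 = v then 1 else 0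

/-- Origin incidence matrix (unweighted). -/
def dartM : Matrix G.Dart V ℂ := Matrix.of fun e v => if e.toProd.1 = v then 1 else 0

/-- Weighted origin incidence matrix. -/
def dartK : Matrix V G.Dart ℂ := Matrix.of fun v f => if f.toProd.1 = v then w f else 0

lemma LK : dartL G * dartK G w = edgeBw G w := by
  ext e f
  simp only [dartL, dartK, edgeBw, Matrix.mul_apply, Matrix.of_apply, ite_mul, one_mul, zero_mul]
  rw [Finset.sum_ite_eq Finset.univ e.toProd.2 (fun v => if f.toProd.1 = v then w f else 0)]
  simp [eq_comm]

lemma KL : dartK G w * dartL G = weightedW G w := by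
  ext u v
  simp only [dartK, dartL, weightedW, Matrix.mul_apply, Matrix.of_apply, mul_ite, mul_one, mul_zero]
  by_cases h : G.Adj u v
  · rw [Finset.sum_eq_single (SimpleGraph.Dart.mk (u, v) h)]
    · simp [h]
    · intro f _ hf
      by_cases h1 : f.toProd.1 = u
      · by_cases h2 : f.toProd.2 = v
        · exact absurd (SimpleGraph.Dart.ext _ _ (Prod.ext h1 h2)) hf
        · simp [h1, h2]
      · simp [h1]
    · simp
  · rw [dif_neg h]
    apply Finset.sum_eq_zero
    intro f _
    by_cases h1 : f.toProd.1 = u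
    · by_cases h2 : f.toProd.2 = v
      · exact absurd (h1 ▸ h2 ▸ f.adj) h
      · simp [h1, h2]
    · simp [h1]

lemma KM : dartK G w * dartM G =
    Matrix.diagonal fun v => ∑ e : G.Dart, if e.toProd.1 = v then w e else 0 := by
  ext u v
  simp only [dartK, dartM, Matrix.mul_apply, Matrix.of_apply, mul_ite, mul_one, mul_zero,
    Matrix.diagonal_apply]
  by_cases h : u = v
  · subst h
    simp only [if_pos rfl]
    apply Finset.sum_congr rfl
    intro f _
    by_cases h1 : f.toProd.1 = u <;> simp [h1]
  · rw [if_neg h]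
    apply Finset.sum_eq_zero
    intro f _
    by_cases h1 : f.toProd.1 = u
    · rw [if_pos h1, if_neg (h1 ▸ fun hh => h (hh ▸ rfl))]
    · simp [h1]

lemma JL : edgeJ ℂ G * dartL G = dartM G := by
  ext e v
  simp only [edgeJ, dartL, dartM, Matrix.mul_apply, Matrix.of_apply, ite_mul, one_mul, zero_mul]
  rw [Finset.sum_ite_eq' Finset.univ e.symm (fun f => if f.toProd.2 = v then 1 else 0)]
  simp [SimpleGraph.Dart.symm_toProd]

lemma JJ : edgeJ ℂ G * edgeJ ℂ G = 1 := by
  ext e f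
  simp only [edgeJ, Matrix.mul_apply, ite_mul, one_mul, zero_mul]
  rw [Finset.sum_ite_eq' Finset.univ e.symm (fun g => if f = g.symm then (1:ℂ) else 0)]
  simp only [Finset.mem_univ, if_true, SimpleGraph.Dart.symm_symm, Matrix.one_apply]
  simp [eq_comm]

lemma exists_dart_edge (ε : Sym2 V) (h : ε ∈ G.edgeSet) : ∃ d : G.Dart, d.edge = ε := by
  induction ε using Sym2.ind with
  | _ u v => exact ⟨SimpleGraph.Dart.mk (u, v) (G.mem_edgeSet.mp h), rfl⟩

noncomputable def pick (ε : G.edgeSet) : G.Dart := (exists_dart_edge G ε.1 ε.2).choose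

lemma pick_edge (ε : G.edgeSet) : (pick G ε).edge = ε := (exists_dart_edge G ε.1 ε.2).choose_spec

lemma pick_inj {ε ε' : G.edgeSet} (h : pick G ε = pick G ε') : ε = ε' := by
  have := pick_edge G ε
  rw [h, pick_edge] at this
  exact Subtype.ext this.symm

lemma pick_ne_symm (ε ε' : G.edgeSet) : pick G ε' ≠ (pick G ε).symm := by
  intro h
  have he : (ε' : Sym2 V) = ε := by
    have := pick_edge G ε'
    rw [h, SimpleGraph.Dart.edge_symm, pick_edge] at this
    exact this.symm
  rw [Subtype.ext he] at h
  exact SimpleGraph.Dart.symm_ne _ h.symm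

noncomputable def dartEquiv : G.Dart ≃ (G.edgeSet ⊕ G.edgeSet) where
  toFun e := if e = pick G ⟨e.edge, e.edge_mem⟩ then Sum.inl ⟨e.edge, e.edge_mem⟩
             else Sum.inr ⟨e.edge, e.edge_mem⟩
  invFun := Sum.elim (pick G) (fun ε => (pick G ε).symm)
  left_inv e := by
    by_cases h : e = pick G ⟨e.edge, e.edge_mem⟩
    · simp only [if_pos h, Sum.elim_inl]; exact h.symm
    · simp only [if_neg h, Sum.elim_inr]
      have hedge : (pick G ⟨e.edge, e.edge_mem⟩).edge = e.edge := pick_edge G _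
      rcases (SimpleGraph.dart_edge_eq_iff _ _).mp hedge with h1 | h1
      · exact absurd h1.symm h
      · rw [h1, SimpleGraph.Dart.symm_symm]
  right_inv x := by
    cases x with
    | inl ε =>
      simp only [Sum.elim_inl]
      have : (⟨(pick G ε).edge, (pick G ε).edge_mem⟩ : G.edgeSet) = ε :=
        Subtype.ext (pick_edge G ε)
      show (if pick G ε = pick G ⟨(pick G ε).edge, (pick G ε).edge_mem⟩ then
        Sum.inl (⟨(pick G ε).edge, (pick G ε).edge_mem⟩ : G.edgeSet)
        else Sum.inr (⟨(pick G ε).edge, (pick G ε).edge_mem⟩ : G.edgeSet)) = Sum.inl ε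
      rw [if_pos (by rw [this])]
      rw [this]
    | inr ε =>
      simp only [Sum.elim_inr]
      have hε : (⟨(pick G ε).symm.edge, (pick G ε).symm.edge_mem⟩ : G.edgeSet) = ε :=
        Subtype.ext (by
          show (pick G ε).symm.edge = (ε : Sym2 V)
          rw [SimpleGraph.Dart.edge_symm]; exact pick_edge G ε)
      show (if (pick G ε).symm = pick G ⟨(pick G ε).symm.edge, (pick G ε).symm.edge_mem⟩ then
        Sum.inl (⟨(pick G ε).symm.edge, (pick G ε).symm.edge_mem⟩ : G.edgeSet)
        else Sum.inr (⟨(pick G ε).symm.edge, (pick G ε).symm.edge_mem⟩ : G.edgeSet)) = Sum.inr ε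
      rw [if_neg, hε]
      rw [hε]
      exact fun h => pick_ne_symm G ε ε h.symm

lemma detJ (t : ℂ) :
    ((1 : Matrix G.Dart G.Dart ℂ) + t • edgeJ ℂ G).det = (1 - t ^ 2) ^ G.edgeFinset.card := by
  classical
  rw [← Matrix.det_submatrix_equiv_self (dartEquiv G).symm]
  have hsub : ((1 : Matrix G.Dart G.Dart ℂ) + t • edgeJ ℂ G).submatrix (dartEquiv G).symm
      (dartEquiv G).symm =
      Matrix.fromBlocks 1 (t • 1) (t • 1) (1 : Matrix G.edgeSet G.edgeSet ℂ) := by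
    ext a b
    have symm_inj : ∀ d d' : G.Dart, d.symm = d'.symm → d = d' := by
      intro d d' h
      have := congrArg SimpleGraph.Dart.symm h
      rwa [SimpleGraph.Dart.symm_symm, SimpleGraph.Dart.symm_symm] at this
    cases a with
    | inl ε =>
      cases b with
      | inl ε' =>
        simp only [Matrix.submatrix_apply, Matrix.add_apply, Matrix.smul_apply, Matrix.one_apply,
          Matrix.fromBlocks_apply₁₁, edgeJ, dartEquiv, Equiv.symm, Equiv.coe_fn_mk, Sum.elim_inl,
          smul_eq_mul]
        rw [if_neg (pick_ne_symm G ε ε')]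
        by_cases h : ε = ε'
        · subst h; simp
        · rw [if_neg (fun hh => h (pick_inj G hh)), if_neg h]; ring
      | inr ε' =>
        simp only [Matrix.submatrix_apply, Matrix.add_apply, Matrix.smul_apply, Matrix.one_apply,
          Matrix.fromBlocks_apply₁₂, edgeJ, dartEquiv, Equiv.symm, Equiv.coe_fn_mk, Sum.elim_inl,
          Sum.elim_inr, smul_eq_mul]
        rw [if_neg (fun hh : pick G ε = (pick G ε').symm => pick_ne_symm G ε' ε hh)]
        by_cases h : ε = ε'
        · subst h; simp
        · rw [if_neg (fun hh => h (pick_inj G (symm_inj _ _ hh)).symm), if_neg h]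
          simp
    | inr ε =>
      cases b with
      | inl ε' =>
        simp only [Matrix.submatrix_apply, Matrix.add_apply, Matrix.smul_apply, Matrix.one_apply,
          Matrix.fromBlocks_apply₂₁, edgeJ, dartEquiv, Equiv.symm, Equiv.coe_fn_mk, Sum.elim_inl,
          Sum.elim_inr, smul_eq_mul]
        rw [if_neg (fun hh : (pick G ε).symm = pick G ε' => pick_ne_symm G ε ε' hh.symm)]
        rw [SimpleGraph.Dart.symm_symm]
        by_cases h : ε = ε'
        · subst h; simp
        · rw [if_neg (fun hh => h (pick_inj G hh).symm), if_neg h]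
          simp
      | inr ε' =>
        simp only [Matrix.submatrix_apply, Matrix.add_apply, Matrix.smul_apply, Matrix.one_apply,
          Matrix.fromBlocks_apply₂₂, edgeJ, dartEquiv, Equiv.symm, Equiv.coe_fn_mk,
          Sum.elim_inr, smul_eq_mul]
        rw [SimpleGraph.Dart.symm_symm]
        rw [if_neg (fun hh : (pick G ε').symm = pick G ε => pick_ne_symm G ε' ε hh.symm)]
        by_cases h : ε = ε'
        · subst h; simp
        · rw [if_neg (fun hh => h (pick_inj G (symm_inj _ _ hh))), if_neg h]; ring
  rw [hsub, Matrix.det_fromBlocks_one₁₁]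
  have h1 : (1 : Matrix G.edgeSet G.edgeSet ℂ) - (t • 1) * (t • 1) = (1 - t ^ 2) • 1 := by
    simp [smul_smul, sub_smul, pow_two]
  rw [h1, Matrix.det_smul, Matrix.det_one, mul_one, SimpleGraph.edgeFinset_card]

lemma main_aux (t : ℂ) (h : (1 : ℂ) - t ^ 2 ≠ 0) :
    (1 - t ^ 2) ^ (Fintype.card V) *
        ((1 : Matrix G.Dart G.Dart ℂ) - t • (edgeBw G w - edgeJ ℂ G)).det =
      (1 - t ^ 2) ^ G.edgeFinset.card *
        ((1 : Matrix V V ℂ) - t • weightedW G w +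
          (t ^ 2) • ((Matrix.diagonal fun v =>
            ∑ e : G.Dart, if e.toProd.1 = v then w e else 0) - 1)).det := by
  have expand : ((1 : Matrix G.Dart G.Dart ℂ) + t • edgeJ ℂ G) * (1 - t • edgeJ ℂ G) =
      ((1 : ℂ) - t ^ 2) • 1 := by
    rw [mul_sub, mul_one, mul_smul_comm, add_mul, one_mul, smul_mul_assoc, JJ, smul_add,
      smul_smul, ← pow_two, sub_smul, one_smul]
    abel
  have hAAinv : ((1 : Matrix G.Dart G.Dart ℂ) + t • edgeJ ℂ G) *
      (((1 : ℂ) - t ^ 2)⁻¹ • (1 - t • edgeJ ℂ G)) = 1 := by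
    rw [Matrix.mul_smul, expand, smul_smul, inv_mul_cancel₀ h, one_smul]
  have h2 : ((1 : Matrix G.Dart G.Dart ℂ) - t • edgeJ ℂ G) * (t • dartL G) =
      t • dartL G - t ^ 2 • dartM G := by
    rw [Matrix.sub_mul, Matrix.one_mul, Matrix.smul_mul, Matrix.mul_smul, JL, smul_smul,
      ← pow_two]
  have hX : dartK G w * ((((1 : ℂ) - t ^ 2)⁻¹ • (1 - t • edgeJ ℂ G)) * (t • dartL G)) =
      ((1 : ℂ) - t ^ 2)⁻¹ • (t • weightedW G w - t ^ 2 • Matrix.diagonal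
        (fun v => ∑ e : G.Dart, if e.toProd.1 = v then w e else 0)) := by
    rw [Matrix.smul_mul, h2, Matrix.mul_smul, Matrix.mul_sub, Matrix.mul_smul, Matrix.mul_smul,
      KL, KM]
  have key : (1 : Matrix G.Dart G.Dart ℂ) - t • (edgeBw G w - edgeJ ℂ G) =
      ((1 : Matrix G.Dart G.Dart ℂ) + t • edgeJ ℂ G) *
        (1 - (((1 : ℂ) - t ^ 2)⁻¹ • (1 - t • edgeJ ℂ G)) * (t • dartL G) * dartK G w) := by
    rw [Matrix.mul_sub, Matrix.mul_one, ← Matrix.mul_assoc, ← Matrix.mul_assoc, hAAinv,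
      Matrix.one_mul, smul_sub, ← LK, Matrix.smul_mul]
    abel
  have detdart : ((1 : Matrix G.Dart G.Dart ℂ) - t • (edgeBw G w - edgeJ ℂ G)).det =
      (1 - t ^ 2) ^ G.edgeFinset.card *
        ((1 : Matrix V V ℂ) - ((1 : ℂ) - t ^ 2)⁻¹ • (t • weightedW G w - t ^ 2 • Matrix.diagonal
          (fun v => ∑ e : G.Dart, if e.toProd.1 = v then w e else 0))).det := by
    rw [key, Matrix.det_mul, detJ, Matrix.det_one_sub_mul_comm, hX]
  have detvert : ((1 : Matrix V V ℂ) - t • weightedW G w +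
      (t ^ 2) • ((Matrix.diagonal fun v =>
        ∑ e : G.Dart, if e.toProd.1 = v then w e else 0) - 1)).det =
      (1 - t ^ 2) ^ (Fintype.card V) *
        ((1 : Matrix V V ℂ) - ((1 : ℂ) - t ^ 2)⁻¹ • (t • weightedW G w - t ^ 2 • Matrix.diagonal
          (fun v => ∑ e : G.Dart, if e.toProd.1 = v then w e else 0))).det := by
    have hmat : (1 : Matrix V V ℂ) - t • weightedW G w +
        (t ^ 2) • ((Matrix.diagonal fun v =>
          ∑ e : G.Dart, if e.toProd.1 = v then w e else 0) - 1) =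
        ((1 : ℂ) - t ^ 2) • ((1 : Matrix V V ℂ) -
          ((1 : ℂ) - t ^ 2)⁻¹ • (t • weightedW G w - t ^ 2 • Matrix.diagonal
            (fun v => ∑ e : G.Dart, if e.toProd.1 = v then w e else 0))) := by
      rw [smul_sub, smul_sub, smul_smul, mul_inv_cancel₀ h, one_smul, sub_smul, one_smul]
      abel
    rw [hmat, Matrix.det_smul]
  rw [detdart, detvert]
  ring

end Aux

section ContAux

lemma dense_good : Dense {t : ℂ | (1 : ℂ) - t ^ 2 = 0}ᶜ := by
  have hsub : {t : ℂ | (1 : ℂ) - t ^ 2 = 0} ⊆ {1, -1} := by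
    intro t ht
    have h2 : t * t = 1 := by
      have h3 : (1 : ℂ) - t ^ 2 = 0 := ht
      rw [sub_eq_zero] at h3
      rw [← sq]
      exact h3.symm
    rcases mul_self_eq_one_iff.mp h2 with h | h <;> simp [h]
  exact Set.Countable.dense_compl ℂ
    ((Set.toFinite ({1, -1} : Set ℂ)).subset hsub).countable

end ContAux

theorem stmt8 {V : Type*} [Fintype V] [DecidableEq V] (G : SimpleGraph V)
    [DecidableRel G.Adj] (hconn : G.Connected)
    (w : G.Dart → ℂ) (hw : ∀ e : G.Dart, w e ≠ 0) (t : ℂ) :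
    (1 - t ^ 2) ^ (Fintype.card V) *
        ((1 : Matrix G.Dart G.Dart ℂ) - t • (edgeBw G w - edgeJ ℂ G)).det =
      (1 - t ^ 2) ^ G.edgeFinset.card *
        ((1 : Matrix V V ℂ) - t • weightedW G w +
          (t ^ 2) • ((Matrix.diagonal fun v =>
            ∑ e : G.Dart, if e.toProd.1 = v then w e else 0) - 1)).det := by
  classical
  set f : ℂ → ℂ := fun t => (1 - t ^ 2) ^ (Fintype.card V) *
        ((1 : Matrix G.Dart G.Dart ℂ) - t • (edgeBw G w - edgeJ ℂ G)).det with hf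
  set g : ℂ → ℂ := fun t => (1 - t ^ 2) ^ G.edgeFinset.card *
        ((1 : Matrix V V ℂ) - t • weightedW G w +
          (t ^ 2) • ((Matrix.diagonal fun v =>
            ∑ e : G.Dart, if e.toProd.1 = v then w e else 0) - 1)).det with hg
  have hcf : Continuous f := by
    apply Continuous.mul
    · exact (continuous_const.sub (continuous_pow 2)).pow _
    · exact (continuous_const.sub ((continuous_id.smul continuous_const))).matrix_det
  have hcg : Continuous g := by
    apply Continuous.mul
    · exact (continuous_const.sub (continuous_pow 2)).pow _
    · exact ((continuous_const.sub (continuous_id.smul continuous_const)).add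
        ((continuous_pow 2).smul continuous_const)).matrix_det
  have heq : f = g := by
    apply Continuous.ext_on dense_good hcf hcg
    intro x hx
    have hx' : (1 : ℂ) - x ^ 2 ≠ 0 := hx
    exact main_aux G w x hx'
  exact congrFun heq t
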